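/- arXiv:2107.03426 — 2 statements merged into one kernel-verified Lean document; each statement's English description precedes it below -/
import Mathlib

section
/- Let J ⊆ ℝ be an interval and let f : J → ℝ be three times continuously differentiable with f'(y) ≥ 0 for all y ∈ J and f'''(y) ≥ b for all y ∈ J, where b > 0. Then for all y₁, y₂ ∈ J, |f(y₁) − f(y₂)| ≥ (b/48)·|y₁ − y₂|³. -/
private lemma mono_aux {S : Set ℝ} (hS : Convex ℝ S) {g g' : ℝ → ℝ}
    (h : ∀ x ∈ S, HasDerivWithinAt g (g' x) S x) (h0 : ∀ x ∈ S, 0 ≤ g' x) :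
    MonotoneOn g S :=
  monotoneOn_of_hasDerivWithinAt_nonneg hS (fun x hx => (h x hx).continuousWithinAt)
    (fun x hx => ((h x (interior_subset hx)).mono interior_subset))
    (fun x hx => h0 x (interior_subset hx))

private lemma anti_aux {S : Set ℝ} (hS : Convex ℝ S) {g g' : ℝ → ℝ}
    (h : ∀ x ∈ S, HasDerivWithinAt g (g' x) S x) (h0 : ∀ x ∈ S, g' x ≤ 0) :
    AntitoneOn g S :=
  antitoneOn_of_hasDerivWithinAt_nonpos hS (fun x hx => (h x hx).continuousWithinAt)
    (fun x hx => ((h x (interior_subset hx)).mono interior_subset))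
    (fun x hx => h0 x (interior_subset hx))

private lemma aux_up
    (J : Set ℝ) (hJ : J.OrdConnected)
    (f f' f'' f''' : ℝ → ℝ)
    (hf : ∀ y ∈ J, HasDerivWithinAt f (f' y) J y)
    (hf' : ∀ y ∈ J, HasDerivWithinAt f' (f'' y) J y)
    (hf'' : ∀ y ∈ J, HasDerivWithinAt f'' (f''' y) J y)
    (b : ℝ) (hb : 0 < b)
    (hmono : ∀ y ∈ J, 0 ≤ f' y)
    (hlow : ∀ y ∈ J, b ≤ f''' y)
    (m : ℝ) (hm : m ∈ J) (hm2 : 0 ≤ f'' m) :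
    ∀ y ∈ J, m ≤ y → f m + b * (y - m) ^ 3 / 6 ≤ f y := by
  set S : Set ℝ := J ∩ Set.Ici m with hSdef
  have hSsub : S ⊆ J := Set.inter_subset_left
  have hSconv : Convex ℝ S := (hJ.inter Set.ordConnected_Ici).convex
  have hmS : m ∈ S := ⟨hm, le_refl m⟩
  -- Step 1: f'' t ≥ b * (t - m) on S
  have hq : ∀ t ∈ S, b * (t - m) ≤ f'' t := by
    have hmon : MonotoneOn (fun t => f'' t - b * (t - m)) S := by
      apply mono_aux hSconv (g' := fun t => f''' t - b)
      · intro x hx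
        have h1 : HasDerivWithinAt (fun t => b * (t - m)) b S x := by
          simpa using ((hasDerivWithinAt_id x S).sub_const m).const_mul b
        exact ((hf'' x (hSsub hx)).mono hSsub).sub h1
      · intro x hx
        have := hlow x (hSsub hx); linarith
    intro t ht
    have := hmon hmS ht ht.2
    simp only [sub_self, mul_zero, sub_zero] at this
    linarith
  -- Step 2: f' t ≥ b * (t - m)^2 / 2 on S
  have hp : ∀ t ∈ S, b * (t - m) ^ 2 / 2 ≤ f' t := by
    have hmon : MonotoneOn (fun t => f' t - b * (t - m) ^ 2 / 2) S := by
      apply mono_aux hSconv (g' := fun t => f'' t - b * (t - m))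
      · intro x hx
        have h1 : HasDerivWithinAt (fun t => b * (t - m) ^ 2 / 2) (b * (x - m)) S x := by
          have h2 : HasDerivWithinAt (fun t => (t - m) ^ 2) (2 * (x - m)) S x := by
            simpa using ((hasDerivWithinAt_id x S).sub_const m).fun_pow 2
          have := (h2.const_mul b).div_const 2
          rw [show b * (x - m) = b * (2 * (x - m)) / 2 by ring]; exact this
        exact ((hf' x (hSsub hx)).mono hSsub).sub h1
      · intro x hx
        have := hq x hx; linarith
    intro t ht
    have := hmon hmS ht ht.2
    have h0 := hmono m hm
    simp only [sub_self] at this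
    nlinarith [this]
  -- Step 3: f t ≥ f m + b * (t - m)^3 / 6 on S
  have hg : MonotoneOn (fun t => f t - b * (t - m) ^ 3 / 6) S := by
    apply mono_aux hSconv (g' := fun t => f' t - b * (t - m) ^ 2 / 2)
    · intro x hx
      have h1 : HasDerivWithinAt (fun t => b * (t - m) ^ 3 / 6) (b * (x - m) ^ 2 / 2) S x := by
        have h2 : HasDerivWithinAt (fun t => (t - m) ^ 3) (3 * (x - m) ^ 2) S x := by
          simpa using ((hasDerivWithinAt_id x S).sub_const m).fun_pow 3
        have := (h2.const_mul b).div_const 6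
        rw [show b * (x - m) ^ 2 / 2 = b * (3 * (x - m) ^ 2) / 6 by ring]; exact this
      exact ((hf x (hSsub hx)).mono hSsub).sub h1
    · intro x hx
      have := hp x hx; linarith
  intro y hy hmy
  have := hg hmS ⟨hy, hmy⟩ hmy
  simp only [sub_self] at this
  have h30 : (0:ℝ) ^ 3 = 0 := by norm_num
  rw [h30] at this
  linarith

private lemma aux_down
    (J : Set ℝ) (hJ : J.OrdConnected)
    (f f' f'' f''' : ℝ → ℝ)
    (hf : ∀ y ∈ J, HasDerivWithinAt f (f' y) J y)
    (hf' : ∀ y ∈ J, HasDerivWithinAt f' (f'' y) J y)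
    (hf'' : ∀ y ∈ J, HasDerivWithinAt f'' (f''' y) J y)
    (b : ℝ) (hb : 0 < b)
    (hmono : ∀ y ∈ J, 0 ≤ f' y)
    (hlow : ∀ y ∈ J, b ≤ f''' y)
    (m : ℝ) (hm : m ∈ J) (hm2 : f'' m ≤ 0) :
    ∀ y ∈ J, y ≤ m → f y + b * (m - y) ^ 3 / 6 ≤ f m := by
  set S : Set ℝ := J ∩ Set.Iic m with hSdef
  have hSsub : S ⊆ J := Set.inter_subset_left
  have hSconv : Convex ℝ S := (hJ.inter Set.ordConnected_Iic).convex
  have hmS : m ∈ S := ⟨hm, le_refl m⟩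
  -- Step 1: f'' t ≤ b * (t - m) on S
  have hq : ∀ t ∈ S, f'' t ≤ b * (t - m) := by
    have hmon : MonotoneOn (fun t => f'' t - b * (t - m)) S := by
      apply mono_aux hSconv (g' := fun t => f''' t - b)
      · intro x hx
        have h1 : HasDerivWithinAt (fun t => b * (t - m)) b S x := by
          simpa using ((hasDerivWithinAt_id x S).sub_const m).const_mul b
        exact ((hf'' x (hSsub hx)).mono hSsub).sub h1
      · intro x hx
        have := hlow x (hSsub hx); linarith
    intro t ht
    have := hmon ht hmS ht.2
    simp only [sub_self, mul_zero, sub_zero] at this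
    linarith
  -- Step 2: f' t ≥ b * (t - m)^2 / 2 on S
  have hp : ∀ t ∈ S, b * (t - m) ^ 2 / 2 ≤ f' t := by
    have hmon : AntitoneOn (fun t => f' t - b * (t - m) ^ 2 / 2) S := by
      apply anti_aux hSconv (g' := fun t => f'' t - b * (t - m))
      · intro x hx
        have h1 : HasDerivWithinAt (fun t => b * (t - m) ^ 2 / 2) (b * (x - m)) S x := by
          have h2 : HasDerivWithinAt (fun t => (t - m) ^ 2) (2 * (x - m)) S x := by
            simpa using ((hasDerivWithinAt_id x S).sub_const m).fun_pow 2
          have := (h2.const_mul b).div_const 2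
          rw [show b * (x - m) = b * (2 * (x - m)) / 2 by ring]; exact this
        exact ((hf' x (hSsub hx)).mono hSsub).sub h1
      · intro x hx
        have := hq x hx; linarith
    intro t ht
    have := hmon ht hmS ht.2
    have h0 := hmono m hm
    simp only [sub_self] at this
    nlinarith [this]
  -- Step 3
  have hg : MonotoneOn (fun t => f t - b * (t - m) ^ 3 / 6) S := by
    apply mono_aux hSconv (g' := fun t => f' t - b * (t - m) ^ 2 / 2)
    · intro x hx
      have h1 : HasDerivWithinAt (fun t => b * (t - m) ^ 3 / 6) (b * (x - m) ^ 2 / 2) S x := by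
        have h2 : HasDerivWithinAt (fun t => (t - m) ^ 3) (3 * (x - m) ^ 2) S x := by
          simpa using ((hasDerivWithinAt_id x S).sub_const m).fun_pow 3
        have := (h2.const_mul b).div_const 6
        rw [show b * (x - m) ^ 2 / 2 = b * (3 * (x - m) ^ 2) / 6 by ring]; exact this
      exact ((hf x (hSsub hx)).mono hSsub).sub h1
    · intro x hx
      have := hp x hx; linarith
  intro y hy hym
  have := hg ⟨hy, hym⟩ hmS hym
  simp only [sub_self] at this
  have hcube : (y - m) ^ 3 = -((m - y) ^ 3) := by ring
  rw [hcube] at this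
  have h30 : (0:ℝ) ^ 3 = 0 := by norm_num
  rw [h30] at this
  linarith

/-- If `f` is C³ on an interval `J ⊆ ℝ` with `f' ≥ 0` and `f''' ≥ b > 0`
on `J`, then `|f y₁ − f y₂| ≥ (b/48)|y₁ − y₂|³` for all `y₁, y₂ ∈ J`. -/
theorem stmt_0
    (J : Set ℝ) (hJ : J.OrdConnected)
    (f f' f'' f''' : ℝ → ℝ)
    (hf : ∀ y ∈ J, HasDerivWithinAt f (f' y) J y)
    (hf' : ∀ y ∈ J, HasDerivWithinAt f' (f'' y) J y)
    (hf'' : ∀ y ∈ J, HasDerivWithinAt f'' (f''' y) J y)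
    (hf''' : ContinuousOn f''' J)
    (b : ℝ) (hb : 0 < b)
    (hmono : ∀ y ∈ J, 0 ≤ f' y)
    (hlow : ∀ y ∈ J, b ≤ f''' y) :
    ∀ y₁ ∈ J, ∀ y₂ ∈ J, b / 48 * |y₁ - y₂| ^ 3 ≤ |f y₁ - f y₂| := by
  have hfmono : MonotoneOn f J := mono_aux hJ.convex hf hmono
  -- main claim for ordered pairs
  have key : ∀ y₂ ∈ J, ∀ y₁ ∈ J, y₂ ≤ y₁ → b / 48 * (y₁ - y₂) ^ 3 ≤ f y₁ - f y₂ := by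
    intro y₂ hy₂ y₁ hy₁ h12
    set m : ℝ := (y₁ + y₂) / 2 with hmdef
    have hmJ : m ∈ J := hJ.out hy₂ hy₁ ⟨by simp [hmdef]; linarith, by simp [hmdef]; linarith⟩
    rcases le_or_gt 0 (f'' m) with hc | hc
    · have h1 := aux_up J hJ f f' f'' f''' hf hf' hf'' b hb hmono hlow m hmJ hc
        y₁ hy₁ (by simp [hmdef]; linarith)
      have h2 : f y₂ ≤ f m := hfmono hy₂ hmJ (by simp [hmdef]; linarith)
      have hym : y₁ - m = (y₁ - y₂) / 2 := by simp [hmdef]; ring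
      rw [hym] at h1
      nlinarith [h1, h2]
    · have h1 := aux_down J hJ f f' f'' f''' hf hf' hf'' b hb hmono hlow m hmJ hc.le
        y₂ hy₂ (by simp [hmdef]; linarith)
      have h2 : f m ≤ f y₁ := hfmono hmJ hy₁ (by simp [hmdef]; linarith)
      have hym : m - y₂ = (y₁ - y₂) / 2 := by simp [hmdef]; ring
      rw [hym] at h1
      nlinarith [h1, h2]
  intro y₁ hy₁ y₂ hy₂
  rcases le_total y₂ y₁ with h | h
  · have := key y₂ hy₂ y₁ hy₁ h
    have habs : |y₁ - y₂| = y₁ - y₂ := abs_of_nonneg (by linarith)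
    rw [habs]
    calc b / 48 * (y₁ - y₂) ^ 3 ≤ f y₁ - f y₂ := this
      _ ≤ |f y₁ - f y₂| := le_abs_self _
  · have := key y₁ hy₁ y₂ hy₂ h
    have habs : |y₁ - y₂| = y₂ - y₁ := by rw [abs_sub_comm]; exact abs_of_nonneg (by linarith)
    rw [habs]
    calc b / 48 * (y₂ - y₁) ^ 3 ≤ f y₂ - f y₁ := this
      _ ≤ |f y₁ - f y₂| := by rw [abs_sub_comm]; exact le_abs_self _
end

section
/- Let J ⊆ ℝ be an interval and let f : J → ℝ be three times continuously differentiable with f' ≥ 0 and f''' ≥ b > 0 on J. Then for all y₁, y₂ ∈ J, |y₁ − y₂| ≤ (48/b)^(1/3) · |f(y₁) − f(y₂)|^(1/3). In particular, f is injective and its inverse (on f(J)) is Hölder continuous with exponent 1/3 and constant (48/b)^(1/3). -/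
private lemma monoOn_aux {D : Set ℝ} (hD : Convex ℝ D) {g g' : ℝ → ℝ}
    (h : ∀ x ∈ D, HasDerivWithinAt g (g' x) D x) (h0 : ∀ x ∈ D, 0 ≤ g' x) :
    MonotoneOn g D :=
  monotoneOn_of_hasDerivWithinAt_nonneg hD (fun x hx => (h x hx).continuousWithinAt)
    (fun x hx => ((h x (interior_subset hx)).mono interior_subset))
    (fun x hx => h0 x (interior_subset hx))

private lemma antiOn_aux {D : Set ℝ} (hD : Convex ℝ D) {g g' : ℝ → ℝ}
    (h : ∀ x ∈ D, HasDerivWithinAt g (g' x) D x) (h0 : ∀ x ∈ D, g' x ≤ 0) :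
    AntitoneOn g D :=
  antitoneOn_of_hasDerivWithinAt_nonpos hD (fun x hx => (h x hx).continuousWithinAt)
    (fun x hx => ((h x (interior_subset hx)).mono interior_subset))
    (fun x hx => h0 x (interior_subset hx))

private lemma key_aux
    (J : Set ℝ) (hJ : J.OrdConnected)
    (f f' f'' f''' : ℝ → ℝ)
    (hf : ∀ y ∈ J, HasDerivWithinAt f (f' y) J y)
    (hf' : ∀ y ∈ J, HasDerivWithinAt f' (f'' y) J y)
    (hf'' : ∀ y ∈ J, HasDerivWithinAt f'' (f''' y) J y)
    (b : ℝ) (hb : 0 < b)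
    (hmono : ∀ y ∈ J, 0 ≤ f' y)
    (hlow : ∀ y ∈ J, b ≤ f''' y) :
    ∀ u ∈ J, ∀ v ∈ J, u ≤ v → b * (v - u) ^ 3 / 48 ≤ f v - f u := by
  intro u hu v hv huv
  set m : ℝ := (u + v) / 2 with hm
  have hum : u ≤ m := by rw [hm]; linarith
  have hmv : m ≤ v := by rw [hm]; linarith
  have hmJ : m ∈ J := hJ.out hu hv ⟨hum, hmv⟩
  have hconv : Convex ℝ J := hJ.convex
  -- Level 1: g₂ t = f'' t - b * t is monotone on J
  have hg2 : MonotoneOn (fun t => f'' t - b * t) J := by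
    apply monoOn_aux hconv (g' := fun t => f''' t - b)
    · intro x hx
      have h1 : HasDerivWithinAt (fun t : ℝ => b * t) (b * 1) J x :=
        (hasDerivWithinAt_id x J).const_mul b
      have h2 := (hf'' x hx).sub h1
      rw [mul_one] at h2
      exact h2
    · intro x hx; linarith [hlow x hx]
  -- Level 2: g₁ t = f' t - (f'' m * (t - m) + b * (t - m)^2 / 2) has min at m on J
  set g₁ : ℝ → ℝ := fun t => f' t - (f'' m * (t - m) + b * (t - m) ^ 2 / 2) with hg1def
  have hg1d : ∀ x ∈ J, HasDerivWithinAt g₁ (f'' x - (f'' m + b * (x - m))) J x := by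
    intro x hx
    have hid : HasDerivAt (fun t : ℝ => t - m) 1 x := (hasDerivAt_id x).sub_const m
    have hp : HasDerivAt (fun t : ℝ => f'' m * (t - m) + b * (t - m) ^ 2 / 2)
        (f'' m + b * (x - m)) x := by
      have h1 := hid.const_mul (f'' m)
      have h2 := (hid.pow 2).const_mul b
      have h3 := (h1.add h2).div_const 2
      have h4 := h1.add (h2.div_const 2)
      exact h4.congr_deriv (by push_cast; ring)
    exact (hf' x hx).sub hp.hasDerivWithinAt
  have hg1min : ∀ t ∈ J, g₁ m ≤ g₁ t := by
    intro t ht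
    rcases le_total m t with hmt | htm
    · have hmonoR : MonotoneOn g₁ (J ∩ Set.Ici m) := by
        apply monoOn_aux (hconv.inter (convex_Ici m))
          (g' := fun x => f'' x - (f'' m + b * (x - m)))
        · exact fun x hx => (hg1d x hx.1).mono Set.inter_subset_left
        · intro x hx
          have := hg2 hmJ hx.1 hx.2
          simp only at this
          nlinarith [hx.2, Set.mem_Ici.mp hx.2]
      exact hmonoR ⟨hmJ, le_refl m⟩ ⟨ht, hmt⟩ hmt
    · have hantiL : AntitoneOn g₁ (J ∩ Set.Iic m) := by
        apply antiOn_aux (hconv.inter (convex_Iic m))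
          (g' := fun x => f'' x - (f'' m + b * (x - m)))
        · exact fun x hx => (hg1d x hx.1).mono Set.inter_subset_left
        · intro x hx
          have := hg2 hx.1 hmJ hx.2
          simp only at this
          nlinarith [Set.mem_Iic.mp hx.2]
      exact hantiL ⟨ht, htm⟩ ⟨hmJ, le_refl m⟩ htm
  -- Level 3: g₀ monotone on J
  set g₀ : ℝ → ℝ := fun t =>
    f t - (f' m * (t - m) + f'' m * (t - m) ^ 2 / 2 + b * (t - m) ^ 3 / 6) with hg0def
  have hg0 : MonotoneOn g₀ J := by
    apply monoOn_aux hconv (g' := fun x => g₁ x - g₁ m)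
    · intro x hx
      have hid : HasDerivAt (fun t : ℝ => t - m) 1 x := (hasDerivAt_id x).sub_const m
      have h1 := hid.const_mul (f' m)
      have h2 := ((hid.pow 2).const_mul (f'' m)).div_const 2
      have h3 := ((hid.pow 3).const_mul b).div_const 6
      have hp := (h1.add h2).add h3
      have := (hf x hx).sub hp.hasDerivWithinAt
      refine this.congr_deriv ?_
      simp only [hg1def]
      push_cast; ring
    · intro x hx; linarith [hg1min x hx]
  have hfin := hg0 hu hv huv
  have hfm : 0 ≤ f' m := hmono m hmJ
  simp only [hg0def] at hfin
  have hvm : v - m = (v - u) / 2 := by rw [hm]; ring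
  have hum' : u - m = -((v - u) / 2) := by rw [hm]; ring
  rw [hvm, hum'] at hfin
  have h0 : 0 ≤ v - u := sub_nonneg.mpr huv
  nlinarith [mul_nonneg hb.le (pow_nonneg h0 3), mul_nonneg hfm h0]

/-- If `f` is C³ on an interval `J ⊆ ℝ` with `f' ≥ 0` and `f''' ≥ b > 0`
on `J`, then `|y₁ − y₂| ≤ (48/b)^(1/3) |f y₁ − f y₂|^(1/3)` for all `y₁, y₂ ∈ J`;
in particular `f` is injective on `J` and its inverse on `f(J)` is `1/3`-Hölder with
constant `(48/b)^(1/3)`. -/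
theorem stmt_1
    (J : Set ℝ) (hJ : J.OrdConnected)
    (f f' f'' f''' : ℝ → ℝ)
    (hf : ∀ y ∈ J, HasDerivWithinAt f (f' y) J y)
    (hf' : ∀ y ∈ J, HasDerivWithinAt f' (f'' y) J y)
    (hf'' : ∀ y ∈ J, HasDerivWithinAt f'' (f''' y) J y)
    (hf''' : ContinuousOn f''' J)
    (b : ℝ) (hb : 0 < b)
    (hmono : ∀ y ∈ J, 0 ≤ f' y)
    (hlow : ∀ y ∈ J, b ≤ f''' y) :
    (∀ y₁ ∈ J, ∀ y₂ ∈ J,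
        |y₁ - y₂| ≤ (48 / b) ^ ((1 : ℝ) / 3) * |f y₁ - f y₂| ^ ((1 : ℝ) / 3)) ∧
    Set.InjOn f J ∧
    (∀ p ∈ f '' J, ∀ q ∈ f '' J,
        |Function.invFunOn f J p - Function.invFunOn f J q|
          ≤ (48 / b) ^ ((1 : ℝ) / 3) * |p - q| ^ ((1 : ℝ) / 3)) := by
  have key := key_aux J hJ f f' f'' f''' hf hf' hf'' b hb hmono hlow
  have main : ∀ y₁ ∈ J, ∀ y₂ ∈ J,
      |y₁ - y₂| ≤ (48 / b) ^ ((1 : ℝ) / 3) * |f y₁ - f y₂| ^ ((1 : ℝ) / 3) := by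
    have aux : ∀ u ∈ J, ∀ v ∈ J, u ≤ v →
        |u - v| ≤ (48 / b) ^ ((1 : ℝ) / 3) * |f u - f v| ^ ((1 : ℝ) / 3) := by
      intro u hu v hv huv
      have hk := key u hu v hv huv
      have h0 : 0 ≤ v - u := sub_nonneg.mpr huv
      have hd0 : 0 ≤ f v - f u := by nlinarith [pow_nonneg h0 3]
      have h48b : (0:ℝ) ≤ 48 / b := by positivity
      have hcube : (v - u) ^ 3 ≤ (48 / b) * (f v - f u) := by
        rw [div_mul_eq_mul_div, le_div_iff₀ hb]
        nlinarith
      have hr : ((v - u) ^ 3 : ℝ) ^ ((1:ℝ)/3) ≤ ((48 / b) * (f v - f u)) ^ ((1:ℝ)/3) :=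
        Real.rpow_le_rpow (by positivity) hcube (by norm_num)
      have hl : ((v - u) ^ 3 : ℝ) ^ ((1:ℝ)/3) = v - u := by
        rw [← Real.rpow_natCast (v - u) 3, ← Real.rpow_mul h0]
        norm_num
      have hrr : ((48 / b) * (f v - f u)) ^ ((1:ℝ)/3)
          = (48 / b) ^ ((1:ℝ)/3) * (f v - f u) ^ ((1:ℝ)/3) :=
        Real.mul_rpow h48b hd0
      rw [abs_sub_comm, abs_of_nonneg h0, abs_sub_comm, abs_of_nonneg hd0]
      rw [hl] at hr; rw [hrr] at hr; exact hr
    intro y₁ h₁ y₂ h₂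
    rcases le_total y₁ y₂ with h | h
    · exact aux y₁ h₁ y₂ h₂ h
    · rw [abs_sub_comm, abs_sub_comm (f y₁)]
      exact aux y₂ h₂ y₁ h₁ h
  have hinj : Set.InjOn f J := by
    intro y₁ h₁ y₂ h₂ heq
    have := main y₁ h₁ y₂ h₂
    rw [heq, sub_self, abs_zero, Real.zero_rpow (by norm_num), mul_zero] at this
    have := abs_nonpos_iff.mp (le_antisymm this (abs_nonneg _)).le
    linarith [sub_eq_zero.mp this, this]
  refine ⟨main, hinj, ?_⟩
  intro p hp q hq
  obtain ⟨a, ha, hap⟩ := hp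
  obtain ⟨c, hc, hcq⟩ := hq
  have hpmem : Function.invFunOn f J p ∈ J := Function.invFunOn_mem ⟨a, ha, hap⟩
  have hqmem : Function.invFunOn f J q ∈ J := Function.invFunOn_mem ⟨c, hc, hcq⟩
  have hpf : f (Function.invFunOn f J p) = p := Function.invFunOn_eq ⟨a, ha, hap⟩
  have hqf : f (Function.invFunOn f J q) = q := Function.invFunOn_eq ⟨c, hc, hcq⟩
  have := main _ hpmem _ hqmem
  rwa [hpf, hqf] at this
end
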